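/- (Gap bound within a stage) In the scheme for min_{y∈Y}{f(y): g(y)≤0}, suppose at step t of stage s the upper bound f̄_s^t = α_s f(y^{s,t}) + (1−α_s) g(y^{s,t}) for some y^{s,t} ∈ Y whose pair (f(y^{s,t}), g(y^{s,t})) is in the filter Q_{s,t}, and the lower bound f̲_{s,t} satisfies f̲_{s,t}/α_s ≤ Opt̲_{s,t} with f̄_s^t − f̲_{s,t} ≤ ε_t. If α_s lies in the middle third of the segment Δ_{s,t} = {α: h_{s,t}(α) ≥ 0}, then Gap(s,t) ≤ 3 h_{s,t}(α_s) ≤ 3(f̄_s^t − f̲_{s,t}) ≤ 3ε_t. -/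
import Mathlib


theorem stmt18 (h : ℝ → ℝ) (a b : ℝ) (hab : a < b)
    (hsub : Set.Icc a b ⊆ Set.Icc (0:ℝ) 1)
    (hconc : ConcaveOn ℝ (Set.Icc (0:ℝ) 1) h)
    (hΔ : {α ∈ Set.Icc (0:ℝ) 1 | 0 ≤ h α} = Set.Icc a b)
    (αs : ℝ) (hmid : αs ∈ Set.Icc (a + (b - a)/3) (b - (b - a)/3))
    (fy gy OptLb fbar flb εt : ℝ)
    (hfbar : fbar = αs * fy + (1 - αs) * gy)
    (hhαs : h αs ≤ αs * (fy - OptLb) + (1 - αs) * gy)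
    (hflb : flb ≤ αs * OptLb)
    (hεt : fbar - flb ≤ εt) :
    sSup (h '' Set.Icc (0:ℝ) 1) ≤ 3 * h αs ∧
    h αs ≤ fbar - flb ∧
    sSup (h '' Set.Icc (0:ℝ) 1) ≤ 3 * εt := by
  obtain ⟨hm1, hm2⟩ := hmid
  have hL : 0 < b - a := by linarith
  have hαsab : αs ∈ Set.Icc a b := ⟨by linarith, by linarith⟩
  have hnonneg : ∀ x ∈ Set.Icc a b, 0 ≤ h x := by
    intro x hx
    have hx' : x ∈ {α ∈ Set.Icc (0:ℝ) 1 | 0 ≤ h α} := hΔ ▸ hx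
    exact hx'.2
  have hαsnn : 0 ≤ h αs := hnonneg αs hαsab
  have hbab : b ∈ Set.Icc a b := ⟨hab.le, le_refl b⟩
  have haab : a ∈ Set.Icc a b := ⟨le_refl a, hab.le⟩
  have key : ∀ x ∈ Set.Icc (0:ℝ) 1, h x ≤ 3 * h αs := by
    intro x hx
    rcases le_or_gt (h x) 0 with h0 | h0
    · linarith
    · have hxab : x ∈ Set.Icc a b := by
        rw [← hΔ]; exact ⟨hx, h0.le⟩
      rcases lt_trichotomy x αs with hlt | heq | hlt
      · -- x < αs, mix x with b
        have hbx : 0 < b - x := by linarith [hαsab.2]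
        set lam := (b - αs) / (b - x) with hlam
        have hlamnn : 0 ≤ lam := div_nonneg (by linarith [hαsab.2]) hbx.le
        have hlam1 : lam ≤ 1 := by
          rw [hlam, div_le_one hbx]; linarith
        have hlammul : lam * (b - x) = b - αs := div_mul_cancel₀ _ hbx.ne'
        have hcomb : lam • x + (1 - lam) • b = αs := by
          simp only [smul_eq_mul]; nlinarith [hlammul]
        have hmu : (0:ℝ) ≤ 1 - lam := by linarith
        have hsum : lam + (1 - lam) = 1 := by ring
        have hcc := hconc.2 (hsub hxab) (hsub hbab) hlamnn hmu hsum
        rw [hcomb] at hcc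
        simp only [smul_eq_mul] at hcc
        have hbnn : 0 ≤ h b := hnonneg b hbab
        have hlam3 : 1/3 ≤ lam := by
          rw [hlam, le_div_iff₀ hbx]
          have := hxab.1
          linarith
        nlinarith [mul_nonneg (by linarith : (0:ℝ) ≤ 1 - lam) hbnn,
          mul_le_mul_of_nonneg_right hlam3 h0.le]
      · subst heq; linarith
      · -- αs < x, mix a with x
        have hax : 0 < x - a := by linarith [hαsab.1]
        set lam := (αs - a) / (x - a) with hlam
        have hlamnn : 0 ≤ lam := div_nonneg (by linarith [hαsab.1]) hax.le
        have hlam1 : lam ≤ 1 := by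
          rw [hlam, div_le_one hax]; linarith
        have hlammul : lam * (x - a) = αs - a := div_mul_cancel₀ _ hax.ne'
        have hcomb : lam • x + (1 - lam) • a = αs := by
          simp only [smul_eq_mul]; nlinarith [hlammul]
        have hmu : (0:ℝ) ≤ 1 - lam := by linarith
        have hsum : lam + (1 - lam) = 1 := by ring
        have hcc := hconc.2 (hsub hxab) (hsub haab) hlamnn hmu hsum
        rw [hcomb] at hcc
        simp only [smul_eq_mul] at hcc
        have hann : 0 ≤ h a := hnonneg a haab
        have hlam3 : 1/3 ≤ lam := by
          rw [hlam, le_div_iff₀ hax]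
          have := hxab.2
          linarith
        nlinarith [mul_nonneg (by linarith : (0:ℝ) ≤ 1 - lam) hann,
          mul_le_mul_of_nonneg_right hlam3 h0.le]
  have hsup : sSup (h '' Set.Icc (0:ℝ) 1) ≤ 3 * h αs := by
    apply csSup_le ((Set.nonempty_Icc.2 (by norm_num)).image h)
    rintro y ⟨x, hx, rfl⟩
    exact key x hx
  have hmul : αs * (fy - OptLb) = αs * fy - αs * OptLb := by ring
  have h2 : h αs ≤ fbar - flb := by
    rw [hmul] at hhαs; linarith
  exact ⟨hsup, h2, by linarith⟩
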